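/- Let Ω ⊆ ℝ^d be a connected open set and f : Ω → Ω a C²-map with f^n = id for some n ≥ 1. Then the set F = {x ∈ Ω : f(x) = x and df_x = Id} is open in Ω. -/

import Mathlib

open Set

/-- If `Ω ⊆ ℝ^d` is a connected open set and `f : Ω → Ω` is `C²`
with `f^n = id` on `Ω`, then `F = {x ∈ Ω : f x = x and df_x = Id}` is open. -/
theorem stmt1 {d : ℕ} {Ω : Set (EuclideanSpace ℝ (Fin d))}
    (hΩo : IsOpen Ω) (hΩc : IsConnected Ω)
    {f : EuclideanSpace ℝ (Fin d) → EuclideanSpace ℝ (Fin d)}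
    (hmaps : MapsTo f Ω Ω) (hC2 : ContDiffOn ℝ 2 f Ω)
    {n : ℕ} (hn : 0 < n) (hiter : ∀ x ∈ Ω, f^[n] x = x) :
    IsOpen {x | x ∈ Ω ∧ f x = x ∧
      fderiv ℝ f x = ContinuousLinearMap.id ℝ (EuclideanSpace ℝ (Fin d))} := by
  let E := EuclideanSpace ℝ (Fin d)
  have hC1 : ContDiffOn ℝ 1 f Ω := hC2.of_le one_le_two
  -- iterates map Ω to Ω and are C¹ on Ω
  have hitC1 : ∀ k : ℕ, MapsTo (f^[k]) Ω Ω ∧ ContDiffOn ℝ 1 (f^[k]) Ω := by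
    intro k
    induction k with
    | zero => simpa using ⟨mapsTo_id Ω, contDiffOn_id⟩
    | succ k ih =>
      rw [Function.iterate_succ']
      exact ⟨hmaps.comp ih.1, hC1.comp ih.2 ih.1⟩
  rw [isOpen_iff_forall_mem_open]
  rintro x₀ ⟨hx₀Ω, hfx₀, hdf⟩
  have hfd : HasFDerivAt f (ContinuousLinearMap.id ℝ E) x₀ := by
    have := ((hC1.contDiffAt (hΩo.mem_nhds hx₀Ω)).differentiableAt one_ne_zero).hasFDerivAt
    rwa [hdf] at this
  -- iterates fix x₀ with derivative Id
  have hitd : ∀ k : ℕ, f^[k] x₀ = x₀ ∧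
      HasFDerivAt (f^[k]) (ContinuousLinearMap.id ℝ E) x₀ := by
    intro k
    induction k with
    | zero => simpa using hasFDerivAt_id x₀
    | succ k ih =>
      rw [Function.iterate_succ']
      refine ⟨by simp [Function.comp, ih.1, hfx₀], ?_⟩
      have := HasFDerivAt.comp (g := f) x₀ (by rwa [ih.1]) ih.2
      exact this.congr_fderiv (by ext; rfl)
  -- the average map
  set h : E → E := fun y => (n : ℝ)⁻¹ • ∑ k ∈ Finset.range n, f^[k] y with hh
  have hhC1 : ContDiffOn ℝ 1 h Ω := by
    apply ContDiffOn.const_smul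
    exact ContDiffOn.sum fun k _ => (hitC1 k).2
  have hhd : HasFDerivAt h (ContinuousLinearMap.id ℝ E) x₀ := by
    have hs : HasFDerivAt (fun y => ∑ k ∈ Finset.range n, f^[k] y)
        (∑ k ∈ Finset.range n, ContinuousLinearMap.id ℝ E) x₀ :=
      HasFDerivAt.fun_sum fun k _ => (hitd k).2
    have := hs.const_smul ((n : ℝ)⁻¹)
    simpa [Pi.smul_def, Finset.sum_const, smul_smul, ← Nat.cast_smul_eq_nsmul ℝ,
      inv_mul_cancel₀ (Nat.cast_ne_zero.2 hn.ne' : (n : ℝ) ≠ 0)] using this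
  -- strict derivative, hence local injectivity
  have hstrict : HasStrictFDerivAt h
      ((ContinuousLinearEquiv.refl ℝ E : E ≃L[ℝ] E) : E →L[ℝ] E) x₀ := by
    have hca : ContDiffAt ℝ 1 h x₀ := hhC1.contDiffAt (hΩo.mem_nhds hx₀Ω)
    have := hca.hasStrictFDerivAt one_ne_zero
    rwa [hhd.fderiv] at this
  set ph := hstrict.toOpenPartialHomeomorph h with hph
  have hsrc : x₀ ∈ ph.source := hstrict.mem_toOpenPartialHomeomorph_source
  have hinj : InjOn h ph.source := ph.injOn
  -- h ∘ f = h on Ω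
  have hkey : ∀ y ∈ Ω, h (f y) = h y := by
    intro y hy
    have hshift : ∑ k ∈ Finset.range n, f^[k] (f y) = ∑ k ∈ Finset.range n, f^[k] y := by
      have h1 : ∀ k, f^[k] (f y) = f^[k+1] y := by
        intro k; rw [Function.iterate_succ_apply]
      simp only [h1]
      have e1 : ∑ k ∈ Finset.range (n+1), f^[k] y
          = (∑ k ∈ Finset.range n, f^[k+1] y) + f^[0] y := Finset.sum_range_succ' _ n
      have e2 : ∑ k ∈ Finset.range (n+1), f^[k] y
          = (∑ k ∈ Finset.range n, f^[k] y) + f^[n] y := Finset.sum_range_succ _ n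
      have e3 : (∑ k ∈ Finset.range n, f^[k+1] y) + f^[0] y
          = (∑ k ∈ Finset.range n, f^[k] y) + f^[n] y := by rw [← e1, e2]
      rw [hiter y hy, Function.iterate_zero_apply] at e3
      exact add_right_cancel e3
    simp only [hh, hshift]
  -- the open neighborhood
  set V : Set E := (Ω ∩ f ⁻¹' ph.source) ∩ ph.source with hV
  have hVopen : IsOpen V :=
    ((hC1.continuousOn.isOpen_inter_preimage hΩo ph.open_source)).inter ph.open_source
  have hVΩ : V ⊆ Ω := fun y hy => hy.1.1
  have hfix : ∀ y ∈ V, f y = y := by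
    rintro y ⟨⟨hyΩ, hyf⟩, hys⟩
    exact hinj hyf hys (hkey y hyΩ)
  refine ⟨V, ?_, hVopen, ?_⟩
  · rintro y hyV
    have hfy := hfix y hyV
    refine ⟨hVΩ hyV, hfy, ?_⟩
    have heq : f =ᶠ[nhds y] id := by
      filter_upwards [hVopen.mem_nhds hyV] with z hz using hfix z hz
    rw [heq.fderiv_eq, fderiv_id]
  · exact ⟨⟨hx₀Ω, by rw [mem_preimage, hfx₀]; exact hsrc⟩, hsrc⟩
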